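/- Let 0 < a ≤ 1, u₀ ∈ [−π/2, π/2] and v₀ ∈ [0, 2π]. Then every continuously differentiable path γ : [0,1] → ℝ³ whose image is contained in S_a, with γ(0) = r(u₀, v₀) and γ(1) = (g(π/2), 0, 0) (the tip of S_a), has Euclidean length ∫₀¹ ‖γ'(t)‖ dt ≥ π/2 − u₀. Moreover, the meridian path t ↦ r(u₀ + t(π/2 − u₀), v₀) has length exactly π/2 − u₀. Consequently, the intrinsic (geodesic) distance on S_a from a point r(u,v) to the tip (g(π/2),0,0) equals π/2 − u, and the geodesic discs of S_a centered at the tip are precisely the caps U_{a,b}. -/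

import Mathlib

open Real

/-- The profile function `g(u) = ∫₀ᵘ √(1 - a² sin² t) dt`. -/
noncomputable def gProf (a u : ℝ) : ℝ :=
  ∫ t in (0:ℝ)..u, Real.sqrt (1 - a ^ 2 * Real.sin t ^ 2)

/-- The parametrization `r(u,v) = (g(u), a cos u cos v, a cos u sin v)` of the
surface of revolution `S_a ⊆ ℝ³`. -/
noncomputable def rSurf (a u v : ℝ) : EuclideanSpace ℝ (Fin 3) :=
  (WithLp.equiv 2 (Fin 3 → ℝ)).symm
    ![gProf a u, a * Real.cos u * Real.cos v, a * Real.cos u * Real.sin v]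

/-- The surface `S_a ⊆ ℝ³`: the image of the parametrization `r`. -/
noncomputable def Ssurf (a : ℝ) : Set (EuclideanSpace ℝ (Fin 3)) :=
  (fun p : ℝ × ℝ => rSurf a p.1 p.2) '' (Set.Icc (-(π/2)) (π/2) ×ˢ Set.Icc 0 (2*π))

/-- The tip `(g(π/2), 0, 0)` of the surface `S_a`. -/
noncomputable def tip (a : ℝ) : EuclideanSpace ℝ (Fin 3) :=
  (WithLp.equiv 2 (Fin 3 → ℝ)).symm ![gProf a (π/2), 0, 0]

/-- `IsPathOn a γ p q` : `γ : [0,1] → ℝ³` is a continuously differentiable path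
whose image is contained in `S_a`, going from `p` to `q`. -/
def IsPathOn (a : ℝ) (γ : ℝ → EuclideanSpace ℝ (Fin 3))
    (p q : EuclideanSpace ℝ (Fin 3)) : Prop :=
  ContDiffOn ℝ 1 γ (Set.Icc 0 1) ∧ γ '' Set.Icc 0 1 ⊆ Ssurf a ∧ γ 0 = p ∧ γ 1 = q

/-- The Euclidean length `∫₀¹ ‖γ'(t)‖ dt` of a path `γ : [0,1] → ℝ³`. -/
noncomputable def pathLength (γ : ℝ → EuclideanSpace ℝ (Fin 3)) : ℝ :=
  ∫ t in (0:ℝ)..1, ‖derivWithin γ (Set.Icc 0 1) t‖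

/-- The intrinsic (geodesic) distance on `S_a` from `p` to the tip: the infimum
of Euclidean arc lengths of `C¹` paths joining `p` to the tip within `S_a`. -/
noncomputable def distToTip (a : ℝ) (p : EuclideanSpace ℝ (Fin 3)) : ℝ :=
  sInf {ℓ : ℝ | ∃ γ : ℝ → EuclideanSpace ℝ (Fin 3),
    IsPathOn a γ p (tip a) ∧ ℓ = pathLength γ}


open Set MeasureTheory intervalIntegral Filter
section basics
variable {a : ℝ}

variable {a : ℝ}

lemma fInt_cont : Continuous (fun t => Real.sqrt (1 - a ^ 2 * Real.sin t ^ 2)) := by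
  exact (continuous_const.sub (continuous_const.mul ((Real.continuous_sin).pow 2))).sqrt

lemma one_sub_nonneg (ha0 : 0 ≤ a) (ha1 : a ≤ 1) (t : ℝ) : 0 ≤ 1 - a ^ 2 * Real.sin t ^ 2 := by
  nlinarith [Real.sin_sq_le_one t, sq_nonneg (Real.sin t)]

lemma fInt_nonneg (t : ℝ) : 0 ≤ Real.sqrt (1 - a ^ 2 * Real.sin t ^ 2) := Real.sqrt_nonneg _

lemma fInt_sq (ha0 : 0 ≤ a) (ha1 : a ≤ 1) (t : ℝ) :
    Real.sqrt (1 - a ^ 2 * Real.sin t ^ 2) ^ 2 = 1 - a ^ 2 * Real.sin t ^ 2 :=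
  Real.sq_sqrt (one_sub_nonneg ha0 ha1 t)

lemma fInt_ge_cos_sq (ha0 : 0 ≤ a) (ha1 : a ≤ 1) (t : ℝ) :
    Real.cos t ^ 2 ≤ Real.sqrt (1 - a ^ 2 * Real.sin t ^ 2) := by
  have ha2 : a ^ 2 ≤ 1 := by nlinarith
  have h1 : Real.cos t ^ 2 ≤ 1 - a ^ 2 * Real.sin t ^ 2 := by
    nlinarith [Real.sin_sq_add_cos_sq t, sq_nonneg (Real.sin t)]
  have h2 : (1 - a ^ 2 * Real.sin t ^ 2) ≤ Real.sqrt (1 - a ^ 2 * Real.sin t ^ 2) := by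
    rw [Real.le_sqrt (one_sub_nonneg ha0 ha1 t) (one_sub_nonneg ha0 ha1 t)]
    nlinarith [mul_nonneg (one_sub_nonneg ha0 ha1 t)
      (mul_nonneg (sq_nonneg a) (sq_nonneg (Real.sin t)))]
  linarith

lemma hasDerivAt_gProf (u : ℝ) :
    HasDerivAt (gProf a) (Real.sqrt (1 - a ^ 2 * Real.sin u ^ 2)) u := by
  apply intervalIntegral.integral_hasDerivAt_right (fInt_cont.intervalIntegrable _ _)
    (fInt_cont.stronglyMeasurable.stronglyMeasurableAtFilter)
    fInt_cont.continuousAt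

lemma gProf_contDiff : ContDiff ℝ 1 (gProf a) := by
  rw [contDiff_one_iff_deriv]
  refine ⟨fun u => (hasDerivAt_gProf u).differentiableAt, ?_⟩
  have : deriv (gProf a) = fun u => Real.sqrt (1 - a ^ 2 * Real.sin u ^ 2) := by
    funext u; exact (hasDerivAt_gProf u).deriv
  rw [this]; exact fInt_cont

lemma cos_zero_countable : Set.Countable {t : ℝ | Real.cos t = 0} := by
  have : {t : ℝ | Real.cos t = 0} ⊆ Set.range (fun k : ℤ => (2 * (k:ℝ) + 1) * π / 2) := by
    intro t ht
    rcases Real.cos_eq_zero_iff.1 ht with ⟨k, hk⟩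
    exact ⟨k, hk.symm⟩
  exact Set.Countable.mono this (Set.countable_range _)

lemma gProf_strictMono (ha0 : 0 < a) (ha1 : a ≤ 1) : StrictMono (gProf a) := by
  intro u v huv
  have key : 0 < ∫ t in u..v, Real.sqrt (1 - a ^ 2 * Real.sin t ^ 2) := by
    rw [intervalIntegral.integral_pos_iff_support_of_nonneg_ae
      (Filter.Eventually.of_forall fInt_nonneg) (fInt_cont.intervalIntegrable _ _)]
    refine ⟨huv, ?_⟩
    have hsub : Set.Ioc u v \ {t : ℝ | Real.cos t = 0} ⊆
        Function.support (fun t => Real.sqrt (1 - a ^ 2 * Real.sin t ^ 2)) ∩ Set.Ioc u v := by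
      rintro t ⟨ht, hcos⟩
      refine ⟨?_, ht⟩
      simp only [Function.mem_support]
      have hc : Real.cos t ≠ 0 := hcos
      have : 0 < 1 - a ^ 2 * Real.sin t ^ 2 := by
        have ha2 : a ^ 2 ≤ 1 := by nlinarith
        have h1 : Real.sin t ^ 2 < 1 := by
          nlinarith [Real.sin_sq_add_cos_sq t, pow_two_pos_of_ne_zero hc]
        nlinarith [sq_nonneg (Real.sin t), sq_nonneg (a * Real.sin t)]
      positivity
    calc (0:ENNReal) < volume (Set.Ioc u v \ {t : ℝ | Real.cos t = 0}) := by
          rw [measure_diff_null (cos_zero_countable.measure_zero _)]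
          simp [huv]
      _ ≤ _ := measure_mono hsub
  have heq := intervalIntegral.integral_interval_sub_left
      ((fInt_cont (a := a)).intervalIntegrable (μ := volume) 0 v)
      ((fInt_cont (a := a)).intervalIntegrable (μ := volume) 0 u)
  simp only [gProf]
  linarith

lemma gProf_lower (ha0 : 0 ≤ a) (ha1 : a ≤ 1) {u : ℝ} (hu : 0 ≤ u) :
    u / 2 - 1 / 2 ≤ gProf a u := by
  have h1 : (∫ t in (0:ℝ)..u, Real.cos t ^ 2) ≤ gProf a u := by
    apply intervalIntegral.integral_mono_on hu
      ((Real.continuous_cos.pow 2).intervalIntegrable _ _)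
      (fInt_cont.intervalIntegrable _ _)
    intro t _; exact fInt_ge_cos_sq ha0 ha1 t
  rw [integral_cos_sq] at h1
  simp only [Real.cos_zero, Real.sin_zero, mul_zero, one_mul, sub_zero] at h1
  nlinarith [Real.neg_one_le_sin u, Real.sin_le_one u, Real.neg_one_le_cos u, Real.cos_le_one u]

lemma gProf_upper (ha0 : 0 ≤ a) (ha1 : a ≤ 1) {u : ℝ} (hu : u ≤ 0) :
    gProf a u ≤ u / 2 + 1 / 2 := by
  have key : (∫ t in u..(0:ℝ), Real.cos t ^ 2) ≤
      ∫ t in u..(0:ℝ), Real.sqrt (1 - a ^ 2 * Real.sin t ^ 2) := by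
    apply intervalIntegral.integral_mono_on hu
      ((Real.continuous_cos.pow 2).intervalIntegrable _ _)
      (fInt_cont.intervalIntegrable _ _)
    intro t _; exact fInt_ge_cos_sq ha0 ha1 t
  have e1 : gProf a u = -∫ t in u..(0:ℝ), Real.sqrt (1 - a ^ 2 * Real.sin t ^ 2) := by
    rw [gProf, intervalIntegral.integral_symm]
  have e2 : (∫ t in (0:ℝ)..u, Real.cos t ^ 2) = -∫ t in u..(0:ℝ), Real.cos t ^ 2 := by
    rw [intervalIntegral.integral_symm]
  have h1 : gProf a u ≤ ∫ t in (0:ℝ)..u, Real.cos t ^ 2 := by rw [e1, e2]; linarith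
  rw [integral_cos_sq] at h1
  simp only [Real.cos_zero, Real.sin_zero, mul_zero, one_mul, sub_zero] at h1
  nlinarith [Real.neg_one_le_sin u, Real.sin_le_one u, Real.neg_one_le_cos u, Real.cos_le_one u]

lemma gProf_surjective (ha0 : 0 ≤ a) (ha1 : a ≤ 1) : Function.Surjective (gProf a) := by
  apply Continuous.surjective gProf_contDiff.continuous
  · apply Filter.tendsto_atTop_mono' Filter.atTop
      (f₁ := fun u : ℝ => u / 2 - 1 / 2) (f₂ := gProf a)
    · filter_upwards [Filter.eventually_ge_atTop (0:ℝ)] with u hu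
      exact gProf_lower ha0 ha1 hu
    · simp only [sub_eq_add_neg]
      exact Filter.tendsto_atTop_add_const_right _ _
        (Filter.Tendsto.atTop_div_const (by norm_num) Filter.tendsto_id)
  · apply Filter.tendsto_atBot_mono' Filter.atBot
      (f₂ := gProf a) (f₁ := fun u : ℝ => u / 2 + 1 / 2)
    · filter_upwards [Filter.eventually_le_atBot (0:ℝ)] with u hu
      exact gProf_upper ha0 ha1 hu
    · exact Filter.tendsto_atBot_add_const_right _ _
        (Filter.Tendsto.atBot_div_const (by norm_num) Filter.tendsto_id)
noncomputable def gIso (a : ℝ) (ha0 : 0 < a) (ha1 : a ≤ 1) : ℝ ≃o ℝ :=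
  StrictMono.orderIsoOfSurjective (gProf a) (gProf_strictMono ha0 ha1)
    (gProf_surjective ha0.le ha1)

lemma gIso_symm_g {a : ℝ} (ha0 : 0 < a) (ha1 : a ≤ 1) (x : ℝ) :
    (gIso a ha0 ha1).symm (gProf a x) = x :=
  StrictMono.orderIsoOfSurjective_symm_apply_self _ _ _ x

lemma g_gIso_symm {a : ℝ} (ha0 : 0 < a) (ha1 : a ≤ 1) (x : ℝ) :
    gProf a ((gIso a ha0 ha1).symm x) = x := by
  conv_rhs => rw [← (gIso a ha0 ha1).apply_symm_apply x]
  rw [← StrictMono.coe_orderIsoOfSurjective (gProf a) (gProf_strictMono ha0 ha1)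
    (gProf_surjective ha0.le ha1)]
  rfl

noncomputable def vec3 (x y z : ℝ) : EuclideanSpace ℝ (Fin 3) :=
  (WithLp.equiv 2 (Fin 3 → ℝ)).symm ![x, y, z]

lemma vec3_zero (x y z : ℝ) : vec3 x y z 0 = x := rfl
lemma vec3_one (x y z : ℝ) : vec3 x y z 1 = y := rfl
lemma vec3_two (x y z : ℝ) : vec3 x y z 2 = z := rfl

lemma euc_norm (V : EuclideanSpace ℝ (Fin 3)) :
    ‖V‖ = Real.sqrt (V 0 ^ 2 + V 1 ^ 2 + V 2 ^ 2) := by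
  rw [EuclideanSpace.norm_eq]
  simp [Fin.sum_univ_three, Real.norm_eq_abs, sq_abs, add_assoc]

lemma vec3_norm (x y z : ℝ) : ‖vec3 x y z‖ = Real.sqrt (x ^ 2 + y ^ 2 + z ^ 2) := euc_norm _

lemma vec3_decomp (x y z : ℝ) :
    vec3 x y z = x • EuclideanSpace.single (0 : Fin 3) (1:ℝ)
      + y • EuclideanSpace.single (1 : Fin 3) (1:ℝ)
      + z • EuclideanSpace.single (2 : Fin 3) (1:ℝ) := by
  ext j
  fin_cases j <;>
    simp [vec3, EuclideanSpace.single_apply,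
      PiLp.add_apply, PiLp.smul_apply]

lemma hasDerivAt_vec3 {f g h : ℝ → ℝ} {f' g' h' t : ℝ}
    (hf : HasDerivAt f f' t) (hg : HasDerivAt g g' t) (hh : HasDerivAt h h' t) :
    HasDerivAt (fun s => vec3 (f s) (g s) (h s)) (vec3 f' g' h') t := by
  simp only [vec3_decomp]
  exact ((hf.smul_const _).add (hg.smul_const _)).add (hh.smul_const _)

lemma hasDerivAt_coord {γ : ℝ → EuclideanSpace ℝ (Fin 3)} {V : EuclideanSpace ℝ (Fin 3)}
    {t : ℝ} (hγ : HasDerivAt γ V t) (i : Fin 3) :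
    HasDerivAt (fun s => γ s i) (V i) t := by
  have := (EuclideanSpace.proj (𝕜 := ℝ) i).hasFDerivAt.comp_hasDerivAt t hγ
  exact this
end basics

section meridian
variable {a u₀ v₀ : ℝ}

lemma rSurf_eq_vec3 (a w φ : ℝ) :
    rSurf a w φ = vec3 (gProf a w) (a * Real.cos w * Real.cos φ) (a * Real.cos w * Real.sin φ) :=
  rfl

lemma tip_eq (a v : ℝ) : rSurf a (π/2) v = tip a := by
  rw [rSurf_eq_vec3]
  show _ = vec3 (gProf a (π/2)) 0 0
  rw [Real.cos_pi_div_two]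
  norm_num

lemma meridian_contDiff : ContDiff ℝ 1 (fun t : ℝ => rSurf a (u₀ + t * (π/2 - u₀)) v₀) := by
  simp only [rSurf_eq_vec3, vec3_decomp]
  have hl : ContDiff ℝ 1 (fun t : ℝ => u₀ + t * (π/2 - u₀)) :=
    contDiff_const.add (contDiff_id.mul contDiff_const)
  have hcos : ContDiff ℝ 1 (fun t : ℝ => a * Real.cos (u₀ + t * (π/2 - u₀))) :=
    contDiff_const.mul ((Real.contDiff_cos.of_le le_top).comp hl)
  exact (((gProf_contDiff.comp hl).smul contDiff_const).add
      ((hcos.mul contDiff_const).smul contDiff_const)).add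
    ((hcos.mul contDiff_const).smul contDiff_const)

lemma meridian_hasDerivAt (hu₀ : u₀ ∈ Set.Icc (-(π/2)) (π/2)) (t : ℝ) :
    HasDerivAt (fun s : ℝ => rSurf a (u₀ + s * (π/2 - u₀)) v₀)
      (vec3 (Real.sqrt (1 - a ^ 2 * Real.sin (u₀ + t * (π/2 - u₀)) ^ 2) * (π/2 - u₀))
        (a * (-Real.sin (u₀ + t * (π/2 - u₀)) * (π/2 - u₀)) * Real.cos v₀)
        (a * (-Real.sin (u₀ + t * (π/2 - u₀)) * (π/2 - u₀)) * Real.sin v₀)) t := by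
  simp only [rSurf_eq_vec3]
  set Δ := π/2 - u₀
  have hl : HasDerivAt (fun s : ℝ => u₀ + s * Δ) Δ t := by
    simpa using ((hasDerivAt_id t).mul_const Δ).const_add u₀
  have h1 : HasDerivAt (fun s : ℝ => gProf a (u₀ + s * Δ))
      (Real.sqrt (1 - a ^ 2 * Real.sin (u₀ + t * Δ) ^ 2) * Δ) t :=
    (hasDerivAt_gProf _).comp t hl
  have hc : HasDerivAt (fun s : ℝ => Real.cos (u₀ + s * Δ))
      (-Real.sin (u₀ + t * Δ) * Δ) t := (Real.hasDerivAt_cos _).comp t hl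
  exact hasDerivAt_vec3 h1 ((hc.const_mul a).mul_const _) ((hc.const_mul a).mul_const _)

lemma meridian_length (ha0 : 0 < a) (ha1 : a ≤ 1)
    (hu₀ : u₀ ∈ Set.Icc (-(π/2)) (π/2)) :
    pathLength (fun t : ℝ => rSurf a (u₀ + t * (π/2 - u₀)) v₀) = π/2 - u₀ := by
  have hΔ : 0 ≤ π/2 - u₀ := by linarith [hu₀.2]
  have key : ∀ t ∈ Set.Icc (0:ℝ) 1,
      ‖derivWithin (fun s : ℝ => rSurf a (u₀ + s * (π/2 - u₀)) v₀) (Set.Icc 0 1) t‖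
        = π/2 - u₀ := by
    intro t ht
    have hD := meridian_hasDerivAt (a := a) (v₀ := v₀) hu₀ t
    rw [hD.differentiableAt.derivWithin (uniqueDiffOn_Icc one_pos t ht), hD.deriv, vec3_norm]
    have : (Real.sqrt (1 - a ^ 2 * Real.sin (u₀ + t * (π/2 - u₀)) ^ 2) * (π/2 - u₀)) ^ 2
        + (a * (-Real.sin (u₀ + t * (π/2 - u₀)) * (π/2 - u₀)) * Real.cos v₀) ^ 2
        + (a * (-Real.sin (u₀ + t * (π/2 - u₀)) * (π/2 - u₀)) * Real.sin v₀) ^ 2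
        = (π/2 - u₀) ^ 2 := by
      have h1 := fInt_sq ha0.le ha1 (u₀ + t * (π/2 - u₀))
      have h2 := Real.sin_sq_add_cos_sq v₀
      linear_combination (π/2 - u₀)^2 * h1
        + a^2 * Real.sin (u₀ + t * (π/2 - u₀))^2 * (π/2 - u₀)^2 * h2
    rw [this, Real.sqrt_sq hΔ]
  rw [pathLength, intervalIntegral.integral_congr (g := fun _ => π/2 - u₀)
    (by rw [Set.uIcc_of_le (by norm_num : (0:ℝ) ≤ 1)]; exact fun t ht => key t ht)]
  simp

lemma meridian_isPathOn (ha0 : 0 < a) (ha1 : a ≤ 1)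
    (hu₀ : u₀ ∈ Set.Icc (-(π/2)) (π/2)) (hv₀ : v₀ ∈ Set.Icc (0:ℝ) (2*π)) :
    IsPathOn a (fun t : ℝ => rSurf a (u₀ + t * (π/2 - u₀)) v₀) (rSurf a u₀ v₀) (tip a) := by
  refine ⟨meridian_contDiff.contDiffOn, ?_, by norm_num, ?_⟩
  case refine_2 =>
    show rSurf a (u₀ + 1 * (π/2 - u₀)) v₀ = tip a
    rw [show u₀ + 1 * (π/2 - u₀) = π/2 by ring, tip_eq]
  rintro p ⟨t, ht, rfl⟩
  refine ⟨(u₀ + t * (π/2 - u₀), v₀), ⟨⟨?_, ?_⟩, hv₀⟩, rfl⟩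
  · nlinarith [hu₀.1, hu₀.2, ht.1, ht.2]
  · nlinarith [hu₀.1, hu₀.2, ht.1, ht.2]

end meridian

section lower
open Set MeasureTheory intervalIntegral Filter
variable {a u₀ v₀ : ℝ}


lemma algebra_bound {a S C c P Q R y1 y2 N : ℝ} (hcosu : 0 < C)
    (hcpos : 0 < c) (hc2 : c ^ 2 = 1 - a ^ 2 * S ^ 2)
    (hC : y1 ^ 2 + y2 ^ 2 = C ^ 2)
    (hde : 2 * y1 * Q + 2 * y2 * R = a * (-S * (c⁻¹ * P)) * (2 * C))
    (hN : N ^ 2 = P ^ 2 + Q ^ 2 + R ^ 2) (hNnn : 0 ≤ N) : c⁻¹ * P ≤ N := by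
  set m := c⁻¹ * P with hm
  have hPm : c * m = P := by rw [hm]; field_simp
  have hkey : y1 * Q + y2 * R = -(a * S * m) * C := by linarith [hde]
  have hCS : (y1 * Q + y2 * R) ^ 2 ≤ (y1 ^ 2 + y2 ^ 2) * (Q ^ 2 + R ^ 2) := by
    nlinarith [sq_nonneg (y1 * R - y2 * Q)]
  have hb : (a * S * m) ^ 2 * C ^ 2 ≤ C ^ 2 * (Q ^ 2 + R ^ 2) := by
    calc (a * S * m) ^ 2 * C ^ 2 = (-(a * S * m) * C) ^ 2 := by ring
      _ = (y1 * Q + y2 * R) ^ 2 := by rw [hkey]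
      _ ≤ (y1 ^ 2 + y2 ^ 2) * (Q ^ 2 + R ^ 2) := hCS
      _ = C ^ 2 * (Q ^ 2 + R ^ 2) := by rw [hC]
  have hb2 : (a * S * m) ^ 2 ≤ Q ^ 2 + R ^ 2 := by
    have hCC : 0 < C ^ 2 := by positivity
    nlinarith [hb, hCC]
  have hm2 : m ^ 2 ≤ N ^ 2 := by
    have h1 : c ^ 2 + a ^ 2 * S ^ 2 = 1 := by rw [hc2]; ring
    have expand : m ^ 2 = (c * m) ^ 2 + (a * S * m) ^ 2 := by nlinarith [h1]
    rw [expand, hPm, hN]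
    linarith [hb2]
  nlinarith [hm2, hNnn]


set_option maxHeartbeats 1000000 in
lemma length_lower_bound (ha0 : 0 < a) (ha1 : a ≤ 1)
    (hu₀ : u₀ ∈ Set.Icc (-(π/2)) (π/2)) {γ : ℝ → EuclideanSpace ℝ (Fin 3)}
    (hγ : IsPathOn a γ (rSurf a u₀ v₀) (tip a)) : π/2 - u₀ ≤ pathLength γ := by
  obtain ⟨hsm, himg, hst, hend⟩ := hγ
  set e := gIso a ha0 ha1 with he
  set u : ℝ → ℝ := fun t => e.symm (γ t 0) with hu_def
  set V : ℝ → EuclideanSpace ℝ (Fin 3) := fun t => derivWithin γ (Set.Icc 0 1) t with hV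
  -- membership facts
  have hmem : ∀ t ∈ Set.Icc (0:ℝ) 1, u t ∈ Set.Icc (-(π/2)) (π/2) ∧
      (γ t 1) ^ 2 + (γ t 2) ^ 2 = (a * Real.cos (u t)) ^ 2 := by
    intro t ht
    obtain ⟨⟨w, φ⟩, ⟨hw, hφ⟩, heq⟩ := himg ⟨t, ht, rfl⟩
    have h0' : γ t 0 = gProf a w := by rw [← heq]; rfl
    have h1' : γ t 1 = a * Real.cos w * Real.cos φ := by rw [← heq]; rfl
    have h2' : γ t 2 = a * Real.cos w * Real.sin φ := by rw [← heq]; rfl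
    have huw : u t = w := by rw [hu_def]; simp only [h0']; exact gIso_symm_g ha0 ha1 w
    refine ⟨huw ▸ hw, ?_⟩
    rw [huw, h1', h2']
    linear_combination (a * Real.cos w) ^ 2 * (Real.sin_sq_add_cos_sq φ)
  have hcont : ContinuousOn γ (Set.Icc 0 1) := hsm.continuousOn
  have hX0cont : ContinuousOn (fun t => γ t 0) (Set.Icc 0 1) :=
    (EuclideanSpace.proj (𝕜 := ℝ) (0 : Fin 3)).continuous.comp_continuousOn hcont
  have hucont : ContinuousOn u (Set.Icc 0 1) :=
    (OrderIso.continuous e.symm).comp_continuousOn hX0cont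
  have hu0 : u 0 = u₀ := by
    have h : γ 0 0 = gProf a u₀ := by rw [hst]; rfl
    rw [hu_def]; simp only [h]; exact gIso_symm_g ha0 ha1 u₀
  have hu1 : u 1 = π/2 := by
    have h : γ 1 0 = gProf a (π/2) := by rw [hend]; rfl
    rw [hu_def]; simp only [h]; exact gIso_symm_g ha0 ha1 (π/2)
  have hnormV : ContinuousOn (fun t => ‖V t‖) (Set.Icc 0 1) :=
    (hsm.continuousOn_derivWithin (uniqueDiffOn_Icc one_pos) le_rfl).norm
  have hVint : IntervalIntegrable (fun t => ‖V t‖) volume 0 1 := by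
    apply ContinuousOn.intervalIntegrable
    rwa [Set.uIcc_of_le (by norm_num : (0:ℝ) ≤ 1)]
  rcases eq_or_lt_of_le hu₀.2 with hcase | hcase
  · rw [hcase]
    simp only [sub_self]
    exact intervalIntegral.integral_nonneg (by norm_num) (fun t _ => norm_nonneg _)
  -- the first time u reaches π/2
  set T : Set ℝ := Set.Icc 0 1 ∩ u ⁻¹' {π/2} with hT
  have hTclosed : IsClosed T :=
    hucont.preimage_isClosed_of_isClosed isClosed_Icc isClosed_singleton
  have hTne : (1:ℝ) ∈ T := ⟨by norm_num, by simpa using hu1⟩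
  have hTbdd : BddBelow T := ⟨0, fun x hx => hx.1.1⟩
  set τ := sInf T with hτ
  have hτT : τ ∈ T := hTclosed.csInf_mem ⟨1, hTne⟩ hTbdd
  have hτIcc : τ ∈ Set.Icc (0:ℝ) 1 := hτT.1
  have huτ : u τ = π/2 := hτT.2
  have hτpos : 0 < τ := by
    rcases eq_or_lt_of_le hτIcc.1 with h | h
    · exfalso; rw [← h] at huτ; rw [hu0] at huτ; linarith
    · exact h
  have hlt : ∀ t, 0 ≤ t → t < τ → u t ≠ π/2 := by
    intro t ht0 htτ habs
    exact absurd (csInf_le hTbdd ⟨⟨ht0, htτ.le.trans hτIcc.2⟩, habs⟩) (not_le.2 htτ)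
  -- the last time before τ that u is at -π/2 (or 0)
  set A : Set ℝ := (Set.Icc 0 τ ∩ u ⁻¹' {-(π/2)}) ∪ {0} with hA
  have hAclosed : IsClosed A := by
    apply IsClosed.union _ isClosed_singleton
    exact (hucont.mono (Set.Icc_subset_Icc le_rfl hτIcc.2)).preimage_isClosed_of_isClosed
      isClosed_Icc isClosed_singleton
  have hAne : (0:ℝ) ∈ A := Or.inr rfl
  have hAbdd : BddAbove A := by
    refine ⟨τ, fun x hx => ?_⟩
    rcases hx with hx | hx
    · exact hx.1.2
    · rw [Set.mem_singleton_iff] at hx; rw [hx]; exact hτpos.le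
  set s := sSup A with hs
  have hsA : s ∈ A := hAclosed.csSup_mem ⟨0, hAne⟩ hAbdd
  have hs0 : 0 ≤ s := by
    rcases hsA with h | h
    · exact h.1.1
    · rw [Set.mem_singleton_iff] at h; rw [h]
  have hsle : s ≤ τ := by
    rcases hsA with h | h
    · exact h.1.2
    · rw [Set.mem_singleton_iff] at h; rw [h]; exact hτpos.le
  have hus : u s ≤ u₀ := by
    rcases hsA with h | h
    · rw [h.2]; exact hu₀.1
    · rw [Set.mem_singleton_iff] at h; rw [h, hu0]
  have hsτ : s < τ := by
    rcases eq_or_lt_of_le hsle with h | h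
    · exfalso
      have : u s = π/2 := by rw [h, huτ]
      rw [this] at hus
      linarith
    · exact h
  have hIccsub : Set.Icc s τ ⊆ Set.Icc (0:ℝ) 1 := Set.Icc_subset_Icc hs0 hτIcc.2
  -- interior values
  have hint : ∀ t ∈ Set.Ioo s τ, u t ∈ Set.Ioo (-(π/2)) (π/2) := by
    intro t ht
    have ht01 : t ∈ Set.Icc (0:ℝ) 1 :=
      ⟨hs0.trans ht.1.le, (ht.2.le).trans hτIcc.2⟩
    have hm := (hmem t ht01).1
    rcases eq_or_lt_of_le hm.1 with hL | hL
    · exfalso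
      have : t ∈ A := Or.inl ⟨⟨hs0.trans ht.1.le, ht.2.le⟩, hL.symm⟩
      exact absurd (le_csSup hAbdd this) (not_le.2 ht.1)
    rcases eq_or_lt_of_le hm.2 with hR | hR
    · exact absurd hR (hlt t (hs0.trans ht.1.le) ht.2)
    · exact ⟨hL, hR⟩
  -- the derivative bound
  set u' : ℝ → ℝ := fun t => (Real.sqrt (1 - a ^ 2 * Real.sin (u t) ^ 2))⁻¹ * (V t 0) with hu'
  have claim : ∀ t ∈ Set.Ioo s τ, HasDerivAt u (u' t) t ∧ u' t ≤ ‖V t‖ := by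
    intro t ht
    have ht01 : t ∈ Set.Ioo (0:ℝ) 1 := ⟨lt_of_le_of_lt hs0 ht.1, lt_of_lt_of_le ht.2 hτIcc.2⟩
    have ht01' : t ∈ Set.Icc (0:ℝ) 1 := ⟨ht01.1.le, ht01.2.le⟩
    have hnhds : Set.Icc (0:ℝ) 1 ∈ nhds t := Icc_mem_nhds ht01.1 ht01.2
    have hdiff : DifferentiableAt ℝ γ t :=
      ((hsm.differentiableOn one_ne_zero) t ht01').differentiableAt hnhds
    have hVt : HasDerivAt γ (V t) t := by
      rw [hV]; simp only []
      rw [derivWithin_of_mem_nhds hnhds]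
      exact hdiff.hasDerivAt
    have hX0 := hasDerivAt_coord hVt 0
    have hX1 := hasDerivAt_coord hVt 1
    have hX2 := hasDerivAt_coord hVt 2
    have hcosu : 0 < Real.cos (u t) := Real.cos_pos_of_mem_Ioo (hint t ht)
    have hsin2 : Real.sin (u t) ^ 2 < 1 := by
      nlinarith [Real.sin_sq_add_cos_sq (u t), mul_pos hcosu hcosu]
    have hcpos : 0 < Real.sqrt (1 - a ^ 2 * Real.sin (u t) ^ 2) := by
      apply Real.sqrt_pos.2
      have h1a : (0:ℝ) ≤ 1 - a ^ 2 := by nlinarith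
      nlinarith [mul_nonneg h1a (sq_nonneg (Real.sin (u t)))]
    set c := Real.sqrt (1 - a ^ 2 * Real.sin (u t) ^ 2) with hc
    have hg' : HasDerivAt (gProf a) c (e.symm (γ t 0)) := by
      rw [show e.symm (γ t 0) = u t from rfl]
      exact hasDerivAt_gProf (u t)
    have hinv : HasDerivAt (⇑e.symm) c⁻¹ (γ t 0) :=
      HasDerivAt.of_local_left_inverse (OrderIso.continuous e.symm).continuousAt
        hg' hcpos.ne' (Filter.Eventually.of_forall (fun y => g_gIso_symm ha0 ha1 y))
    have hu_deriv : HasDerivAt u (c⁻¹ * V t 0) t := hinv.comp t hX0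
    refine ⟨hu_deriv, ?_⟩
    -- now the bound
    have hC : (γ t 1) ^ 2 + (γ t 2) ^ 2 = (a * Real.cos (u t)) ^ 2 := (hmem t ht01').2
    have hq : HasDerivAt (fun r => (γ r 1) ^ 2 + (γ r 2) ^ 2)
        (2 * (γ t 1) * (V t 1) + 2 * (γ t 2) * (V t 2)) t := by
      have h1 := ((hasDerivAt_coord hVt 1).mul (hasDerivAt_coord hVt 1)).add
        ((hasDerivAt_coord hVt 2).mul (hasDerivAt_coord hVt 2))
      have h2 : V t 1 * γ t 1 + γ t 1 * V t 1 + (V t 2 * γ t 2 + γ t 2 * V t 2)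
          = 2 * (γ t 1) * (V t 1) + 2 * (γ t 2) * (V t 2) := by ring
      rw [h2] at h1
      simp only [pow_two]
      exact h1
    have hqne : (γ t 1) ^ 2 + (γ t 2) ^ 2 ≠ 0 := by
      rw [hC]
      positivity
    have hρ1 : HasDerivAt (fun r => Real.sqrt ((γ r 1) ^ 2 + (γ r 2) ^ 2))
        ((2 * (γ t 1) * (V t 1) + 2 * (γ t 2) * (V t 2))
          / (2 * Real.sqrt ((γ t 1) ^ 2 + (γ t 2) ^ 2))) t := hq.sqrt hqne
    have hEq : ∀ r ∈ Set.Icc (0:ℝ) 1,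
        Real.sqrt ((γ r 1) ^ 2 + (γ r 2) ^ 2) = a * Real.cos (u r) := by
      intro r hr
      rw [(hmem r hr).2, Real.sqrt_sq]
      have hur := (hmem r hr).1
      have := Real.cos_nonneg_of_mem_Icc ⟨hur.1, hur.2⟩
      positivity
    have hρ2 : HasDerivAt (fun r => Real.sqrt ((γ r 1) ^ 2 + (γ r 2) ^ 2))
        (a * (-Real.sin (u t) * (c⁻¹ * V t 0))) t := by
      have hc2 : HasDerivAt (fun r => a * Real.cos (u r))
          (a * (-Real.sin (u t) * (c⁻¹ * V t 0))) t :=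
        ((Real.hasDerivAt_cos (u t)).comp t hu_deriv).const_mul a
      apply hc2.congr_of_eventuallyEq
      exact Filter.eventuallyEq_of_mem hnhds hEq
    have hde := hρ1.unique hρ2
    rw [hEq t ht01', div_eq_iff (by positivity : (2 * (a * Real.cos (u t))) ≠ 0)] at hde
    have hNsq : ‖V t‖ ^ 2 = (V t 0) ^ 2 + (V t 1) ^ 2 + (V t 2) ^ 2 := by
      rw [euc_norm (V t), Real.sq_sqrt (by positivity)]
    exact algebra_bound (mul_pos ha0 hcosu) hcpos (fInt_sq ha0.le ha1 (u t)) hC hde hNsq (norm_nonneg _)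
  -- FTC inequality
  have hVintOn : IntegrableOn (fun t => ‖V t‖) (Set.Icc s τ) volume :=
    (hnormV.mono hIccsub).integrableOn_compact isCompact_Icc
  have hFTC := sub_le_integral_of_hasDeriv_right_of_le hsτ.le
    (hucont.mono hIccsub)
    (fun x hx => ((claim x hx).1).hasDerivWithinAt)
    hVintOn (fun x hx => (claim x hx).2)
  have hmono : (∫ y in s..τ, ‖V y‖) ≤ ∫ y in (0:ℝ)..1, ‖V y‖ :=
    intervalIntegral.integral_mono_interval hs0 hsτ.le hτIcc.2
      (Filter.Eventually.of_forall (fun y => norm_nonneg _)) hVint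
  rw [huτ] at hFTC
  calc π/2 - u₀ ≤ π/2 - u s := by linarith
    _ ≤ ∫ y in s..τ, ‖V y‖ := hFTC
    _ ≤ ∫ y in (0:ℝ)..1, ‖V y‖ := hmono
    _ = pathLength γ := rfl

end lower

section assemble
variable {a u₀ v₀ : ℝ}

lemma dist_eq (ha0 : 0 < a) (ha1 : a ≤ 1) (hu₀ : u₀ ∈ Set.Icc (-(π/2)) (π/2))
    (hv₀ : v₀ ∈ Set.Icc (0:ℝ) (2*π)) :
    distToTip a (rSurf a u₀ v₀) = π/2 - u₀ := by
  have hmem : (π/2 - u₀) ∈ {ℓ : ℝ | ∃ γ : ℝ → EuclideanSpace ℝ (Fin 3),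
      IsPathOn a γ (rSurf a u₀ v₀) (tip a) ∧ ℓ = pathLength γ} :=
    ⟨_, meridian_isPathOn ha0 ha1 hu₀ hv₀, (meridian_length ha0 ha1 hu₀).symm⟩
  have hlb : ∀ ℓ ∈ {ℓ : ℝ | ∃ γ : ℝ → EuclideanSpace ℝ (Fin 3),
      IsPathOn a γ (rSurf a u₀ v₀) (tip a) ∧ ℓ = pathLength γ}, π/2 - u₀ ≤ ℓ := by
    rintro ℓ ⟨γ, hγ, rfl⟩
    exact length_lower_bound ha0 ha1 hu₀ hγ
  exact le_antisymm (csInf_le ⟨π/2 - u₀, hlb⟩ hmem) (le_csInf ⟨_, hmem⟩ hlb)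

end assemble

theorem distance_to_tip_and_caps'
    (a : ℝ) (ha0 : 0 < a) (ha1 : a ≤ 1) :
    (∀ u₀ ∈ Set.Icc (-(π/2)) (π/2), ∀ v₀ ∈ Set.Icc (0:ℝ) (2*π),
      (∀ γ : ℝ → EuclideanSpace ℝ (Fin 3),
          IsPathOn a γ (rSurf a u₀ v₀) (tip a) → pathLength γ ≥ π/2 - u₀) ∧
      pathLength (fun t => rSurf a (u₀ + t * (π/2 - u₀)) v₀) = π/2 - u₀ ∧
      distToTip a (rSurf a u₀ v₀) = π/2 - u₀) ∧
    (∀ b ∈ Set.Ioo (-(π/2)) (π/2),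
      {p ∈ Ssurf a | distToTip a p ≤ π/2 - b}
        = (fun p : ℝ × ℝ => rSurf a p.1 p.2) '' (Set.Icc b (π/2) ×ˢ Set.Icc 0 (2*π))) := by
  constructor
  · intro u₀ hu₀ v₀ hv₀
    exact ⟨fun γ hγ => length_lower_bound ha0 ha1 hu₀ hγ,
      meridian_length ha0 ha1 hu₀, dist_eq ha0 ha1 hu₀ hv₀⟩
  · intro b hb
    ext p
    constructor
    · rintro ⟨⟨⟨w, φ⟩, ⟨hw, hφ⟩, rfl⟩, hdist⟩
      have hd := dist_eq ha0 ha1 hw hφ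
      rw [hd] at hdist
      exact ⟨(w, φ), ⟨⟨by linarith, hw.2⟩, hφ⟩, rfl⟩
    · rintro ⟨⟨w, φ⟩, ⟨⟨hbw, hwπ⟩, hφ⟩, rfl⟩
      have hw' : w ∈ Set.Icc (-(π/2)) (π/2) := ⟨le_trans hb.1.le hbw, hwπ⟩
      refine ⟨⟨(w, φ), ⟨hw', hφ⟩, rfl⟩, ?_⟩
      rw [dist_eq ha0 ha1 hw' hφ]
      linarith

/-- **Intrinsic distance to the tip of `S_a`, and caps as geodesic discs**
(used in the Faber–Krahn theorem of the paper). For `0 < a ≤ 1`,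
`u₀ ∈ [-π/2, π/2]` and `v₀ ∈ [0, 2π]`: every `C¹` path in `S_a` from
`r(u₀,v₀)` to the tip `(g(π/2),0,0)` has Euclidean length at least
`π/2 - u₀`; the meridian path `t ↦ r(u₀ + t(π/2 - u₀), v₀)` has length
exactly `π/2 - u₀`; consequently the intrinsic distance from `r(u₀,v₀)` to
the tip equals `π/2 - u₀`, and the geodesic discs of `S_a` centered at the
tip are precisely the caps `U_{a,b}`. -/
theorem distance_to_tip_and_caps
    (a : ℝ) (ha0 : 0 < a) (ha1 : a ≤ 1) :
    (∀ u₀ ∈ Set.Icc (-(π/2)) (π/2), ∀ v₀ ∈ Set.Icc (0:ℝ) (2*π),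
      (∀ γ : ℝ → EuclideanSpace ℝ (Fin 3),
          IsPathOn a γ (rSurf a u₀ v₀) (tip a) → pathLength γ ≥ π/2 - u₀) ∧
      pathLength (fun t => rSurf a (u₀ + t * (π/2 - u₀)) v₀) = π/2 - u₀ ∧
      distToTip a (rSurf a u₀ v₀) = π/2 - u₀) ∧
    (∀ b ∈ Set.Ioo (-(π/2)) (π/2),
      {p ∈ Ssurf a | distToTip a p ≤ π/2 - b}
        = (fun p : ℝ × ℝ => rSurf a p.1 p.2) '' (Set.Icc b (π/2) ×ˢ Set.Icc 0 (2*π))) :=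
  distance_to_tip_and_caps' a ha0 ha1
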